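/- arXiv:math/0501300 — 2 statements merged into one kernel-verified Lean document; each statement's English description precedes it below -/
import Mathlib

section
/- Let s, t ∈ ℝ with 0 ≤ s ≤ 4, t ≥ s, and t(4−s) ≥ 6s − s² − 4. Then for all P, Q ∈ Γ_n with r ≤ p_i/q_i ≤ R for all i: ((r+1)/(2r))^{s−t−1} (((4−s)r + s)/r) Ω_t(P||Q) ≤ ζ_s(Q||P) ≤ ((R+1)/(2R))^{s−t−1} (((4−s)R + s)/R) Ω_t(P||Q). -/
open Real Finset

/-- Relative information of type `s` (generalized Kullback-Leibler divergence). -/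
noncomputable def Phi (n : ℕ) (s : ℝ) (p q : Fin n → ℝ) : ℝ :=
  if s = 0 then ∑ i, q i * Real.log (q i / p i)
  else if s = 1 then ∑ i, p i * Real.log (p i / q i)
  else (s * (s - 1))⁻¹ * ((∑ i, (p i) ^ s * (q i) ^ (1 - s)) - 1)

/-- Unified relative JS and AG divergence of type `s`. -/
noncomputable def Omega (n : ℕ) (s : ℝ) (p q : Fin n → ℝ) : ℝ :=
  if s = 0 then ∑ i, p i * Real.log (2 * p i / (p i + q i))
  else if s = 1 then ∑ i, ((p i + q i) / 2) * Real.log ((p i + q i) / (2 * p i))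
  else (s * (s - 1))⁻¹ * ((∑ i, p i * ((p i + q i) / (2 * p i)) ^ s) - 1)

/-- Relative J-divergence of type `s`. -/
noncomputable def zeta (n : ℕ) (s : ℝ) (p q : Fin n → ℝ) : ℝ :=
  if s = 1 then ∑ i, (p i - q i) * Real.log ((p i + q i) / (2 * q i))
  else (s - 1)⁻¹ * ∑ i, (p i - q i) * ((p i + q i) / (2 * q i)) ^ (s - 1)

noncomputable def Ff (t x : ℝ) : ℝ :=
  if t = 0 then x * Real.log (2 * x / (x + 1))
  else if t = 1 then ((x + 1) / 2) * Real.log ((x + 1) / (2 * x))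
  else (t * (t - 1))⁻¹ * (x * ((x + 1) / (2 * x)) ^ t - x)

noncomputable def Ff' (t x : ℝ) : ℝ :=
  if t = 0 then -Real.log ((x + 1) / (2 * x)) + (x + 1)⁻¹
  else if t = 1 then Real.log ((x + 1) / (2 * x)) / 2 - (2 * x)⁻¹
  else (t * (t - 1))⁻¹ *
    (((x + 1) / (2 * x)) ^ t - t * ((x + 1) / (2 * x)) ^ (t - 1) / (2 * x) - 1)

noncomputable def Gg (s x : ℝ) : ℝ :=
  if s = 1 then (1 - x) * Real.log ((x + 1) / (2 * x))
  else (s - 1)⁻¹ * ((1 - x) * ((x + 1) / (2 * x)) ^ (s - 1))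

noncomputable def Gg' (s x : ℝ) : ℝ :=
  if s = 1 then -Real.log ((x + 1) / (2 * x)) - (1 - x) / (x ^ 2 + x)
  else -((s - 1)⁻¹ * ((x + 1) / (2 * x)) ^ (s - 1)) -
    (1 - x) * ((x + 1) / (2 * x)) ^ (s - 2) / (2 * x ^ 2)

lemma hasDerivAt_A {x : ℝ} (hx : 0 < x) :
    HasDerivAt (fun y : ℝ => (y + 1) / (2 * y)) (-1 / (2 * x ^ 2)) x := by
  have h1 : HasDerivAt (fun y : ℝ => y + 1) 1 x := by
    simpa using (hasDerivAt_id x).add_const 1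
  have h2 : HasDerivAt (fun y : ℝ => 2 * y) 2 x := by
    simpa using (hasDerivAt_id x).const_mul (2 : ℝ)
  have h := h1.div h2 (by positivity)
  refine h.congr_deriv (Eq.symm ?_)
  field_simp
  ring

lemma A_pos {x : ℝ} (hx : 0 < x) : 0 < (x + 1) / (2 * x) := by positivity

lemma hasDerivAt_Apow {x : ℝ} (hx : 0 < x) (p : ℝ) :
    HasDerivAt (fun y : ℝ => ((y + 1) / (2 * y)) ^ p)
      (-1 / (2 * x ^ 2) * p * ((x + 1) / (2 * x)) ^ (p - 1)) x :=
  (hasDerivAt_A hx).rpow_const (Or.inl (ne_of_gt (A_pos hx)))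

lemma rpow_split2 {a : ℝ} (ha : a ≠ 0) (y : ℝ) : a ^ (y - 2) * a * a = a ^ y := by
  rw [← Real.rpow_add_one ha (y - 2), ← Real.rpow_add_one ha]
  congr 1; ring

lemma rpow_split1 {a : ℝ} (ha : a ≠ 0) (y : ℝ) : a ^ (y - 1) * a = a ^ y := by
  rw [← Real.rpow_add_one ha]
  congr 1; ring

lemma hasDerivAt_Ff (t : ℝ) {x : ℝ} (hx : 0 < x) : HasDerivAt (Ff t) (Ff' t x) x := by
  have hx0 : x ≠ 0 := ne_of_gt hx
  have hAne : (x + 1) / (2 * x) ≠ 0 := ne_of_gt (A_pos hx)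
  rcases eq_or_ne t 0 with rfl | ht0
  · have hfun : Ff 0 = fun y : ℝ => -(y * Real.log ((y + 1) / (2 * y))) := by
      funext y
      unfold Ff
      rw [if_pos rfl]
      rw [show 2 * y / (y + 1) = ((y + 1) / (2 * y))⁻¹ by rw [inv_div], Real.log_inv]
      ring
    rw [hfun]
    unfold Ff'; rw [if_pos rfl]
    have h := ((hasDerivAt_id' (x := x)).mul ((hasDerivAt_A hx).log hAne)).neg
    refine h.congr_deriv (Eq.symm ?_)
    field_simp
    ring
  rcases eq_or_ne t 1 with rfl | ht1
  · have hfun : Ff 1 = fun y : ℝ => (y + 1) / 2 * Real.log ((y + 1) / (2 * y)) := by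
      funext y; unfold Ff; rw [if_neg one_ne_zero, if_pos rfl]
    rw [hfun]
    unfold Ff'; rw [if_neg one_ne_zero, if_pos rfl]
    have h1 : HasDerivAt (fun y : ℝ => (y + 1) / 2) (1 / 2) x := by
      simpa using ((hasDerivAt_id x).add_const 1).div_const 2
    have h := h1.mul ((hasDerivAt_A hx).log hAne)
    refine h.congr_deriv (Eq.symm ?_)
    field_simp
    ring
  · have hfun : Ff t = fun y : ℝ => (t * (t - 1))⁻¹ * (y * ((y + 1) / (2 * y)) ^ t - y) := by
      funext y; unfold Ff; rw [if_neg ht0, if_neg ht1]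
    rw [hfun]
    unfold Ff'; rw [if_neg ht0, if_neg ht1]
    have h := (((hasDerivAt_id' (x := x)).mul (hasDerivAt_Apow hx t)).sub
      (hasDerivAt_id' (x := x))).const_mul ((t * (t - 1))⁻¹)
    refine h.congr_deriv (Eq.symm ?_)
    rw [← rpow_split1 hAne t]
    have ht1' : t - 1 ≠ 0 := sub_ne_zero.2 ht1
    field_simp
    ring

lemma hasDerivAt_Gg (s : ℝ) {x : ℝ} (hx : 0 < x) : HasDerivAt (Gg s) (Gg' s x) x := by
  have hx0 : x ≠ 0 := ne_of_gt hx
  have hAne : (x + 1) / (2 * x) ≠ 0 := ne_of_gt (A_pos hx)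
  rcases eq_or_ne s 1 with rfl | hs1
  · have hfun : Gg 1 = fun y : ℝ => (1 - y) * Real.log ((y + 1) / (2 * y)) := by
      funext y; unfold Gg; rw [if_pos rfl]
    rw [hfun]
    unfold Gg'; rw [if_pos rfl]
    have h1 : HasDerivAt (fun y : ℝ => 1 - y) (-1) x := by
      simpa using (hasDerivAt_id' (x := x)).const_sub 1
    have h := h1.mul ((hasDerivAt_A hx).log hAne)
    refine h.congr_deriv (Eq.symm ?_)
    have hx1 : x + 1 ≠ 0 := by positivity
    field_simp
    ring
  · have hfun : Gg s = fun y : ℝ => (s - 1)⁻¹ * ((1 - y) * ((y + 1) / (2 * y)) ^ (s - 1)) := by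
      funext y; unfold Gg; rw [if_neg hs1]
    rw [hfun]
    unfold Gg'; rw [if_neg hs1]
    have h1 : HasDerivAt (fun y : ℝ => 1 - y) (-1) x := by
      simpa using (hasDerivAt_id' (x := x)).const_sub 1
    have h := (h1.mul (hasDerivAt_Apow hx (s - 1))).const_mul ((s - 1)⁻¹)
    refine h.congr_deriv (Eq.symm ?_)
    have hs1' : s - 1 ≠ 0 := sub_ne_zero.2 hs1
    rw [show s - 1 - 1 = s - 2 by ring, ← rpow_split1 hAne (s - 1), show s - 1 - 1 = s - 2 by ring]
    field_simp
    ring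

lemma rpow_neg_two' {a : ℝ} (ha : 0 < a) : a ^ (-2 : ℝ) = (a * a)⁻¹ := by
  rw [show (-2 : ℝ) = -(1 + 1) by norm_num, Real.rpow_neg ha.le, Real.rpow_add ha, Real.rpow_one]

lemma hasDerivAt_Ff' (t : ℝ) {x : ℝ} (hx : 0 < x) :
    HasDerivAt (Ff' t) (((x + 1) / (2 * x)) ^ (t - 2) / (4 * x ^ 3)) x := by
  have hx0 : x ≠ 0 := ne_of_gt hx
  have hx1 : x + 1 ≠ 0 := by positivity
  have hApos := A_pos hx
  have hAne : (x + 1) / (2 * x) ≠ 0 := ne_of_gt hApos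
  have h1 : HasDerivAt (fun y : ℝ => y + 1) 1 x := by
    simpa using (hasDerivAt_id x).add_const 1
  have h2 : HasDerivAt (fun y : ℝ => 2 * y) 2 x := by
    simpa using (hasDerivAt_id x).const_mul (2 : ℝ)
  have h2ne : 2 * x ≠ 0 := by positivity
  rcases eq_or_ne t 0 with rfl | ht0
  · have hfun : Ff' 0 = fun y : ℝ => -Real.log ((y + 1) / (2 * y)) + (y + 1)⁻¹ := by
      funext y; unfold Ff'; rw [if_pos rfl]
    rw [hfun]
    have h := (((hasDerivAt_A hx).log hAne).neg).add (h1.inv hx1)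
    refine h.congr_deriv (Eq.symm ?_)
    rw [show (0 : ℝ) - 2 = -2 by norm_num, rpow_neg_two' hApos]
    field_simp
    ring
  rcases eq_or_ne t 1 with rfl | ht1
  · have hfun : Ff' 1 = fun y : ℝ => Real.log ((y + 1) / (2 * y)) / 2 - (2 * y)⁻¹ := by
      funext y; unfold Ff'; rw [if_neg one_ne_zero, if_pos rfl]
    rw [hfun]
    have h := (((hasDerivAt_A hx).log hAne).div_const 2).sub (h2.inv h2ne)
    refine h.congr_deriv (Eq.symm ?_)
    rw [show (1 : ℝ) - 2 = -1 by norm_num, Real.rpow_neg_one]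
    field_simp
    ring
  · have hfun : Ff' t = fun y : ℝ => (t * (t - 1))⁻¹ *
        (((y + 1) / (2 * y)) ^ t - t * ((y + 1) / (2 * y)) ^ (t - 1) / (2 * y) - 1) := by
      funext y; unfold Ff'; rw [if_neg ht0, if_neg ht1]
    rw [hfun]
    have h := (((hasDerivAt_Apow hx t).sub
        (((hasDerivAt_Apow hx (t - 1)).const_mul t).div h2 h2ne)).sub_const 1).const_mul
        ((t * (t - 1))⁻¹)
    refine h.congr_deriv (Eq.symm ?_)
    have e1 : ((x + 1) / (2 * x)) ^ (t - 1) = ((x + 1) / (2 * x)) ^ (t - 2) * ((x + 1) / (2 * x)) := by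
      rw [← rpow_split1 hAne (t - 1), show t - 1 - 1 = t - 2 by ring]
    have e2 : ((x + 1) / (2 * x)) ^ t = ((x + 1) / (2 * x)) ^ (t - 2) * ((x + 1) / (2 * x)) *
        ((x + 1) / (2 * x)) := (rpow_split2 hAne t).symm
    rw [show t - 1 - 1 = t - 2 by ring, e1]
    have ht1' : t - 1 ≠ 0 := sub_ne_zero.2 ht1
    field_simp
    ring

lemma hasDerivAt_Gg' (s : ℝ) {x : ℝ} (hx : 0 < x) :
    HasDerivAt (Gg' s) (((4 - s) * x + s) * ((x + 1) / (2 * x)) ^ (s - 3) / (4 * x ^ 4)) x := by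
  have hx0 : x ≠ 0 := ne_of_gt hx
  have hx1 : x + 1 ≠ 0 := by positivity
  have hApos := A_pos hx
  have hAne : (x + 1) / (2 * x) ≠ 0 := ne_of_gt hApos
  have h1 : HasDerivAt (fun y : ℝ => 1 - y) (-1) x := by
    simpa using (hasDerivAt_id' (x := x)).const_sub 1
  rcases eq_or_ne s 1 with rfl | hs1
  · have hfun : Gg' 1 = fun y : ℝ => -Real.log ((y + 1) / (2 * y)) - (1 - y) / (y ^ 2 + y) := by
      funext y; unfold Gg'; rw [if_pos rfl]
    rw [hfun]
    have hdenne : x ^ 2 + x ≠ 0 := by positivity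
    have hden : HasDerivAt (fun y : ℝ => y ^ 2 + y) (2 * x + 1) x := by
      have := (hasDerivAt_pow 2 x).add (hasDerivAt_id' (x := x))
      refine this.congr_deriv (Eq.symm ?_)
      norm_num
    have h := (((hasDerivAt_A hx).log hAne).neg).sub (h1.div hden hdenne)
    refine h.congr_deriv (Eq.symm ?_)
    rw [show (1 : ℝ) - 3 = -2 by norm_num, rpow_neg_two' hApos]
    field_simp
    ring
  · have hfun : Gg' s = fun y : ℝ => -((s - 1)⁻¹ * ((y + 1) / (2 * y)) ^ (s - 1)) -
        (1 - y) * ((y + 1) / (2 * y)) ^ (s - 2) / (2 * y ^ 2) := by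
      funext y; unfold Gg'; rw [if_neg hs1]
    rw [hfun]
    have h2sqne : 2 * x ^ 2 ≠ 0 := by positivity
    have h2sq : HasDerivAt (fun y : ℝ => 2 * y ^ 2) (4 * x) x := by
      have := (hasDerivAt_pow 2 x).const_mul (2 : ℝ)
      refine this.congr_deriv (Eq.symm ?_)
      push_cast
      ring
    have h := ((((hasDerivAt_Apow hx (s - 1)).const_mul ((s - 1)⁻¹)).neg)).sub
      ((h1.mul (hasDerivAt_Apow hx (s - 2))).div h2sq h2sqne)
    refine h.congr_deriv (Eq.symm ?_)
    simp only [Pi.mul_apply, Pi.div_apply]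
    have e1 : ((x + 1) / (2 * x)) ^ (s - 2) = ((x + 1) / (2 * x)) ^ (s - 3) * ((x + 1) / (2 * x)) := by
      rw [← rpow_split1 hAne (s - 2), show s - 2 - 1 = s - 3 by ring]
    rw [show s - 1 - 1 = s - 2 by ring, show s - 2 - 1 = s - 3 by ring, e1]
    have hs1' : s - 1 ≠ 0 := sub_ne_zero.2 hs1
    field_simp
    ring

noncomputable def rhoF (s t u : ℝ) : ℝ :=
  ((u + 1) / (2 * u)) ^ (s - t - 1) * (((4 - s) * u + s) / u)

lemma hasDerivAt_rho (s t : ℝ) {x : ℝ} (hx : 0 < x) :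
    HasDerivAt (rhoF s t)
      (((x + 1) / (2 * x)) ^ (s - t - 2) *
        ((t * (4 - s) + 4 - 6 * s + s ^ 2) * x + s * (t - s)) / (2 * x ^ 3)) x := by
  have hx0 : x ≠ 0 := ne_of_gt hx
  have hAne : (x + 1) / (2 * x) ≠ 0 := ne_of_gt (A_pos hx)
  have hil : HasDerivAt (fun y : ℝ => (4 - s) * y + s) (4 - s) x := by
    simpa using ((hasDerivAt_id' (x := x)).const_mul (4 - s)).add_const s
  have hw := hil.div (hasDerivAt_id' (x := x)) hx0
  have h := (hasDerivAt_Apow hx (s - t - 1)).mul hw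
  unfold rhoF
  refine h.congr_deriv (Eq.symm ?_)
  simp only [Pi.mul_apply, Pi.div_apply]
  have e1 : ((x + 1) / (2 * x)) ^ (s - t - 1) =
      ((x + 1) / (2 * x)) ^ (s - t - 2) * ((x + 1) / (2 * x)) := by
    rw [← rpow_split1 hAne (s - t - 1), show s - t - 1 - 1 = s - t - 2 by ring]
  rw [show s - t - 1 - 1 = s - t - 2 by ring, e1]
  field_simp
  ring

lemma rho_mono (s t : ℝ) (hs0 : 0 ≤ s) (hst : s ≤ t)
    (hts : 6 * s - s ^ 2 - 4 ≤ t * (4 - s)) {r R : ℝ} (hr : 0 < r) :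
    MonotoneOn (rhoF s t) (Set.Icc r R) := by
  apply monotoneOn_of_deriv_nonneg (convex_Icc r R)
  · intro x hx
    exact (hasDerivAt_rho s t (lt_of_lt_of_le hr hx.1)).continuousAt.continuousWithinAt
  · rw [interior_Icc]
    intro x hx
    exact (hasDerivAt_rho s t (lt_trans hr hx.1)).differentiableAt.differentiableWithinAt
  · rw [interior_Icc]
    intro x hx
    have hxpos : 0 < x := lt_trans hr hx.1
    rw [(hasDerivAt_rho s t hxpos).deriv]
    have hc : 0 ≤ t * (4 - s) + 4 - 6 * s + s ^ 2 := by linarith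
    have hn : 0 ≤ (t * (4 - s) + 4 - 6 * s + s ^ 2) * x + s * (t - s) :=
      add_nonneg (mul_nonneg hc hxpos.le) (mul_nonneg hs0 (by linarith))
    have hA : (0:ℝ) < ((x + 1) / (2 * x)) ^ (s - t - 2) :=
      Real.rpow_pos_of_pos (A_pos hxpos) _
    positivity

lemma Ff_one (t : ℝ) : Ff t 1 = 0 := by
  unfold Ff
  split_ifs <;> norm_num

lemma Gg_one (s : ℝ) : Gg s 1 = 0 := by
  unfold Gg
  split_ifs <;> norm_num

lemma second_identity (s t : ℝ) {x : ℝ} (hx : 0 < x) :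
    ((4 - s) * x + s) * ((x + 1) / (2 * x)) ^ (s - 3) / (4 * x ^ 4) =
      rhoF s t x * (((x + 1) / (2 * x)) ^ (t - 2) / (4 * x ^ 3)) := by
  have hx0 : x ≠ 0 := ne_of_gt hx
  unfold rhoF
  rw [show s - 3 = s - t - 1 + (t - 2) by ring, Real.rpow_add (A_pos hx)]
  field_simp

lemma convex_lower (s t : ℝ) (hs0 : 0 ≤ s) (hst : s ≤ t)
    (hts : 6 * s - s ^ 2 - 4 ≤ t * (4 - s)) {r R : ℝ} (hr : 0 < r) (hrR : r ≤ R) :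
    ConvexOn ℝ (Set.Icc r R) (fun y => Gg s y - rhoF s t r * Ff t y) := by
  have hmono := rho_mono s t hs0 hst hts (R := R) hr
  apply convexOn_of_hasDerivWithinAt2_nonneg (convex_Icc r R)
    (f' := fun y => Gg' s y - rhoF s t r * Ff' t y)
    (f'' := fun y => ((4 - s) * y + s) * ((y + 1) / (2 * y)) ^ (s - 3) / (4 * y ^ 4) -
      rhoF s t r * (((y + 1) / (2 * y)) ^ (t - 2) / (4 * y ^ 3)))
  · intro x hx
    have hxp : 0 < x := lt_of_lt_of_le hr hx.1
    exact ((hasDerivAt_Gg s hxp).sub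
      ((hasDerivAt_Ff t hxp).const_mul _)).continuousAt.continuousWithinAt
  · rw [interior_Icc]
    intro x hx
    have hxp : 0 < x := lt_trans hr hx.1
    exact ((hasDerivAt_Gg s hxp).sub
      ((hasDerivAt_Ff t hxp).const_mul _)).hasDerivWithinAt
  · rw [interior_Icc]
    intro x hx
    have hxp : 0 < x := lt_trans hr hx.1
    exact ((hasDerivAt_Gg' s hxp).sub
      ((hasDerivAt_Ff' t hxp).const_mul _)).hasDerivWithinAt
  · rw [interior_Icc]
    intro x hx
    have hxp : 0 < x := lt_trans hr hx.1
    rw [second_identity s t hxp]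
    have hrho : rhoF s t r ≤ rhoF s t x :=
      hmono ⟨le_refl r, hrR⟩ ⟨hx.1.le, hx.2.le⟩ hx.1.le
    have hF : (0:ℝ) ≤ ((x + 1) / (2 * x)) ^ (t - 2) / (4 * x ^ 3) := by
      have hA : (0:ℝ) < ((x + 1) / (2 * x)) ^ (t - 2) :=
        Real.rpow_pos_of_pos (A_pos hxp) _
      positivity
    nlinarith [mul_nonneg (sub_nonneg.2 hrho) hF]

lemma convex_upper (s t : ℝ) (hs0 : 0 ≤ s) (hst : s ≤ t)
    (hts : 6 * s - s ^ 2 - 4 ≤ t * (4 - s)) {r R : ℝ} (hr : 0 < r) (hrR : r ≤ R) :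
    ConvexOn ℝ (Set.Icc r R) (fun y => rhoF s t R * Ff t y - Gg s y) := by
  have hmono := rho_mono s t hs0 hst hts (R := R) hr
  apply convexOn_of_hasDerivWithinAt2_nonneg (convex_Icc r R)
    (f' := fun y => rhoF s t R * Ff' t y - Gg' s y)
    (f'' := fun y => rhoF s t R * (((y + 1) / (2 * y)) ^ (t - 2) / (4 * y ^ 3)) -
      ((4 - s) * y + s) * ((y + 1) / (2 * y)) ^ (s - 3) / (4 * y ^ 4))
  · intro x hx
    have hxp : 0 < x := lt_of_lt_of_le hr hx.1
    exact (((hasDerivAt_Ff t hxp).const_mul _).sub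
      (hasDerivAt_Gg s hxp)).continuousAt.continuousWithinAt
  · rw [interior_Icc]
    intro x hx
    have hxp : 0 < x := lt_trans hr hx.1
    exact (((hasDerivAt_Ff t hxp).const_mul _).sub
      (hasDerivAt_Gg s hxp)).hasDerivWithinAt
  · rw [interior_Icc]
    intro x hx
    have hxp : 0 < x := lt_trans hr hx.1
    exact (((hasDerivAt_Ff' t hxp).const_mul _).sub
      (hasDerivAt_Gg' s hxp)).hasDerivWithinAt
  · rw [interior_Icc]
    intro x hx
    have hxp : 0 < x := lt_trans hr hx.1
    rw [second_identity s t hxp]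
    have hrho : rhoF s t x ≤ rhoF s t R :=
      hmono ⟨hx.1.le, hx.2.le⟩ ⟨hrR, le_refl R⟩ hx.2.le
    have hF : (0:ℝ) ≤ ((x + 1) / (2 * x)) ^ (t - 2) / (4 * x ^ 3) := by
      have hA : (0:ℝ) < ((x + 1) / (2 * x)) ^ (t - 2) :=
        Real.rpow_pos_of_pos (A_pos hxp) _
      positivity
    nlinarith [mul_nonneg (sub_nonneg.2 hrho) hF]

lemma sum_Ff (n : ℕ) (t : ℝ) (p q : Fin n → ℝ) (hp : ∀ i, 0 < p i) (hq : ∀ i, 0 < q i)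
    (hp1 : ∑ i, p i = 1) :
    ∑ i, q i * Ff t (p i / q i) = Omega n t p q := by
  rcases eq_or_ne t 0 with rfl | ht0
  · rw [show Omega n 0 p q = ∑ i, p i * Real.log (2 * p i / (p i + q i)) from by
      unfold Omega; rw [if_pos rfl]]
    apply Finset.sum_congr rfl
    intro i _
    have hq0 : q i ≠ 0 := (hq i).ne'
    have hp0 : p i ≠ 0 := (hp i).ne'
    have hqp : q i * (p i / q i) = p i := by
      rw [mul_comm, div_mul_cancel₀ _ hq0]
    unfold Ff; rw [if_pos rfl]
    have harg : 2 * (p i / q i) / (p i / q i + 1) = 2 * p i / (p i + q i) := by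
      have hpq : p i + q i ≠ 0 := ne_of_gt (add_pos (hp i) (hq i))
      field_simp
      try ring
    rw [harg, show q i * (p i / q i * Real.log (2 * p i / (p i + q i))) =
      (q i * (p i / q i)) * Real.log (2 * p i / (p i + q i)) from by ring, hqp]
  rcases eq_or_ne t 1 with rfl | ht1
  · rw [show Omega n 1 p q = ∑ i, ((p i + q i) / 2) * Real.log ((p i + q i) / (2 * p i)) from by
      unfold Omega; rw [if_neg one_ne_zero, if_pos rfl]]
    apply Finset.sum_congr rfl
    intro i _
    have hq0 : q i ≠ 0 := (hq i).ne'
    have hp0 : p i ≠ 0 := (hp i).ne'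
    have hqp : q i * (p i / q i) = p i := by
      rw [mul_comm, div_mul_cancel₀ _ hq0]
    unfold Ff; rw [if_neg one_ne_zero, if_pos rfl]
    have harg : (p i / q i + 1) / (2 * (p i / q i)) = (p i + q i) / (2 * p i) := by
      field_simp
      try ring
    rw [harg, show q i * ((p i / q i + 1) / 2 * Real.log ((p i + q i) / (2 * p i))) =
      (q i * (p i / q i) + q i) / 2 * Real.log ((p i + q i) / (2 * p i)) from by ring, hqp]
  · rw [show Omega n t p q =
        (t * (t - 1))⁻¹ * ((∑ i, p i * ((p i + q i) / (2 * p i)) ^ t) - 1) from by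
      unfold Omega; rw [if_neg ht0, if_neg ht1]]
    have key : ∀ i ∈ Finset.univ, q i * Ff t (p i / q i) =
        (t * (t - 1))⁻¹ * (p i * ((p i + q i) / (2 * p i)) ^ t - p i) := by
      intro i _
      have hq0 : q i ≠ 0 := (hq i).ne'
      have hp0 : p i ≠ 0 := (hp i).ne'
      have hqp : q i * (p i / q i) = p i := by
        rw [mul_comm, div_mul_cancel₀ _ hq0]
      unfold Ff; rw [if_neg ht0, if_neg ht1]
      have harg : (p i / q i + 1) / (2 * (p i / q i)) = (p i + q i) / (2 * p i) := by
        field_simp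
        try ring
      rw [harg, show q i * ((t * (t - 1))⁻¹ *
          (p i / q i * ((p i + q i) / (2 * p i)) ^ t - p i / q i)) =
        (t * (t - 1))⁻¹ * ((q i * (p i / q i)) * ((p i + q i) / (2 * p i)) ^ t -
          q i * (p i / q i)) from by ring, hqp]
    rw [Finset.sum_congr rfl key, ← Finset.mul_sum, Finset.sum_sub_distrib, hp1]

lemma sum_Gg (n : ℕ) (s : ℝ) (p q : Fin n → ℝ) (hp : ∀ i, 0 < p i) (hq : ∀ i, 0 < q i) :
    ∑ i, q i * Gg s (p i / q i) = zeta n s q p := by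
  rcases eq_or_ne s 1 with rfl | hs1
  · rw [show zeta n 1 q p = ∑ i, (q i - p i) * Real.log ((q i + p i) / (2 * p i)) from by
      unfold zeta; rw [if_pos rfl]]
    apply Finset.sum_congr rfl
    intro i _
    have hq0 : q i ≠ 0 := (hq i).ne'
    have hp0 : p i ≠ 0 := (hp i).ne'
    have hq1p : q i * (1 - p i / q i) = q i - p i := by
      rw [mul_sub, mul_one, mul_comm (q i) (p i / q i), div_mul_cancel₀ _ hq0]
    unfold Gg; rw [if_pos rfl]
    have harg : (p i / q i + 1) / (2 * (p i / q i)) = (q i + p i) / (2 * p i) := by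
      field_simp
      try ring
    rw [harg, show q i * ((1 - p i / q i) * Real.log ((q i + p i) / (2 * p i))) =
      (q i * (1 - p i / q i)) * Real.log ((q i + p i) / (2 * p i)) from by ring, hq1p]
  · rw [show zeta n s q p =
        (s - 1)⁻¹ * ∑ i, (q i - p i) * ((q i + p i) / (2 * p i)) ^ (s - 1) from by
      unfold zeta; rw [if_neg hs1]]
    have key : ∀ i ∈ Finset.univ, q i * Gg s (p i / q i) =
        (s - 1)⁻¹ * ((q i - p i) * ((q i + p i) / (2 * p i)) ^ (s - 1)) := by
      intro i _
      have hq0 : q i ≠ 0 := (hq i).ne'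
      have hp0 : p i ≠ 0 := (hp i).ne'
      have hq1p : q i * (1 - p i / q i) = q i - p i := by
        rw [mul_sub, mul_one, mul_comm (q i) (p i / q i), div_mul_cancel₀ _ hq0]
      unfold Gg; rw [if_neg hs1]
      have harg : (p i / q i + 1) / (2 * (p i / q i)) = (q i + p i) / (2 * p i) := by
        field_simp
        try ring
      rw [harg, show q i * ((s - 1)⁻¹ * ((1 - p i / q i) * ((q i + p i) / (2 * p i)) ^ (s - 1))) =
        (s - 1)⁻¹ * ((q i * (1 - p i / q i)) * ((q i + p i) / (2 * p i)) ^ (s - 1)) from by ring,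
        hq1p]
    rw [Finset.sum_congr rfl key, ← Finset.mul_sum]

theorem stmt_14 (s t : ℝ) (hs0 : 0 ≤ s) (hs4 : s ≤ 4) (hst : s ≤ t) (hts : 6 * s - s ^ 2 - 4 ≤ t * (4 - s))
    (n : ℕ) (hn : 2 ≤ n) (p q : Fin n → ℝ)
    (hp : ∀ i, 0 < p i) (hq : ∀ i, 0 < q i)
    (hp1 : ∑ i, p i = 1) (hq1 : ∑ i, q i = 1)
    (r R : ℝ) (hr : 0 < r) (hrR : r ≤ R)
    (hbound : ∀ i, r ≤ p i / q i ∧ p i / q i ≤ R) :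
    ((r + 1) / (2 * r)) ^ (s - t - 1) * (((4 - s) * r + s) / r) * Omega n t p q ≤ zeta n s q p ∧
      zeta n s q p ≤ ((R + 1) / (2 * R)) ^ (s - t - 1) * (((4 - s) * R + s) / R) * Omega n t p q := by
  have hx : ∀ i, p i / q i ∈ Set.Icc r R := fun i => ⟨(hbound i).1, (hbound i).2⟩
  have hq0 : ∀ i : Fin n, 0 ≤ q i := fun i => (hq i).le
  have hsum1 : ∑ i, q i • (p i / q i) = 1 := by
    rw [← hp1]
    apply Finset.sum_congr rfl
    intro i _
    rw [smul_eq_mul, mul_comm, div_mul_cancel₀ _ (hq i).ne']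
  have hΩ := sum_Ff n t p q hp hq hp1
  have hζ := sum_Gg n s p q hp hq
  constructor
  · have hconv := convex_lower s t hs0 hst hts hr hrR
    have hj := hconv.map_sum_le (fun i _ => hq0 i) hq1 (fun i _ => hx i)
    rw [hsum1] at hj
    simp only [smul_eq_mul] at hj
    rw [Gg_one, Ff_one, mul_zero, sub_zero] at hj
    have hsplit : ∑ i, q i * (Gg s (p i / q i) - rhoF s t r * Ff t (p i / q i)) =
        (∑ i, q i * Gg s (p i / q i)) - rhoF s t r * ∑ i, q i * Ff t (p i / q i) := by
      rw [Finset.mul_sum, ← Finset.sum_sub_distrib]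
      apply Finset.sum_congr rfl
      intros
      ring
    rw [hsplit, hΩ, hζ] at hj
    rw [show ((r + 1) / (2 * r)) ^ (s - t - 1) * (((4 - s) * r + s) / r) = rhoF s t r from rfl]
    linarith
  · have hconv := convex_upper s t hs0 hst hts hr hrR
    have hj := hconv.map_sum_le (fun i _ => hq0 i) hq1 (fun i _ => hx i)
    rw [hsum1] at hj
    simp only [smul_eq_mul] at hj
    rw [Gg_one, Ff_one, mul_zero, zero_sub, neg_zero] at hj
    have hsplit : ∑ i, q i * (rhoF s t R * Ff t (p i / q i) - Gg s (p i / q i)) =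
        rhoF s t R * (∑ i, q i * Ff t (p i / q i)) - ∑ i, q i * Gg s (p i / q i) := by
      rw [Finset.mul_sum, ← Finset.sum_sub_distrib]
      apply Finset.sum_congr rfl
      intros
      ring
    rw [hsplit, hΩ, hζ] at hj
    rw [show ((R + 1) / (2 * R)) ^ (s - t - 1) * (((4 - s) * R + s) / R) = rhoF s t R from rfl]
    linarith
end

section
/- Let s, t ∈ ℝ with 0 ≤ s ≤ 4, s ≥ t, and s(t − s + 6) ≥ 4(1 + t). Then for all P, Q ∈ Γ_n with r ≤ p_i/q_i ≤ R for all i: ((r+1)/2)^{s−t−1} (sr + 4 − s) Ω_t(Q||P) ≤ ζ_s(P||Q) ≤ ((R+1)/2)^{s−t−1} (sR + 4 − s) Ω_t(Q||P). -/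
open Real Finset

noncomputable def phiF (s x : ℝ) : ℝ :=
  if s = 1 then (x - 1) * Real.log ((x + 1) / 2)
  else (s - 1)⁻¹ * ((x - 1) * ((x + 1) / 2) ^ (s - 1))

noncomputable def phiD (s x : ℝ) : ℝ :=
  if s = 1 then Real.log ((x + 1) / 2) + (x - 1) / (x + 1)
  else (s - 1)⁻¹ * ((x + 1) / 2) ^ (s - 1) + (x - 1) / 2 * ((x + 1) / 2) ^ (s - 2)

noncomputable def phiD2 (s x : ℝ) : ℝ := 1 / 4 * ((x + 1) / 2) ^ (s - 3) * (s * x + 4 - s)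

lemma hu_pos {x : ℝ} (hx : 0 < x) : 0 < (x + 1) / 2 := by positivity

lemma hasDerivAt_u (x : ℝ) : HasDerivAt (fun y : ℝ => (y + 1) / 2) (1 / 2) x := by
  simpa using ((hasDerivAt_id x).add_const 1).div_const 2

lemma hasDerivAt_rpow_u {c x : ℝ} (hx : 0 < x) :
    HasDerivAt (fun y : ℝ => ((y + 1) / 2) ^ c) (c / 2 * ((x + 1) / 2) ^ (c - 1)) x := by
  have h := (Real.hasDerivAt_rpow_const (x := (x + 1) / 2) (p := c)
      (Or.inl (hu_pos hx).ne')).comp x (hasDerivAt_u x)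
  refine h.congr_deriv ?_
  symm
  ring

lemma hasDerivAt_log_u {x : ℝ} (hx : 0 < x) :
    HasDerivAt (fun y : ℝ => Real.log ((y + 1) / 2)) ((x + 1)⁻¹) x := by
  have h := (hasDerivAt_u x).log (hu_pos hx).ne'
  convert h using 1
  field_simp

lemma phiF_hasDerivAt (s : ℝ) {x : ℝ} (hx : 0 < x) : HasDerivAt (phiF s) (phiD s x) x := by
  by_cases hs : s = 1
  · subst hs
    have heq : phiF 1 = fun y : ℝ => (y - 1) * Real.log ((y + 1) / 2) := by
      funext y; simp [phiF]
    have h := ((hasDerivAt_id x).sub_const 1).mul (hasDerivAt_log_u hx)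
    rw [heq, phiD, if_pos rfl]
    refine h.congr_deriv ?_
    symm
    simp only [id_eq]
    have hx1 : x + 1 ≠ 0 := by linarith
    field_simp
  · have heq : phiF s = fun y : ℝ => (s - 1)⁻¹ * ((y - 1) * ((y + 1) / 2) ^ (s - 1)) := by
      funext y; simp [phiF, hs]
    have h := (((hasDerivAt_id x).sub_const 1).mul (hasDerivAt_rpow_u (c := s - 1) hx)).const_mul
      (s - 1)⁻¹
    rw [heq, phiD, if_neg hs]
    refine h.congr_deriv ?_
    symm
    simp only [id_eq]
    rw [show s - 1 - 1 = s - 2 by ring]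
    have hs1 : s - 1 ≠ 0 := sub_ne_zero.mpr hs
    field_simp

lemma phiD_hasDerivAt (s : ℝ) {x : ℝ} (hx : 0 < x) : HasDerivAt (phiD s) (phiD2 s x) x := by
  have hu := hu_pos hx
  have hx1 : x + 1 ≠ 0 := by linarith
  by_cases hs : s = 1
  · subst hs
    have heq : phiD 1 = fun y : ℝ => Real.log ((y + 1) / 2) + (y - 1) / (y + 1) := by
      funext y; simp [phiD]
    have h := (hasDerivAt_log_u hx).add
      (((hasDerivAt_id x).sub_const 1).div ((hasDerivAt_id x).add_const 1) hx1)
    rw [heq, phiD2]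
    refine h.congr_deriv ?_
    symm
    simp only [id_eq]
    have e2 : ((x + 1) / 2 : ℝ) ^ ((1 : ℝ) - 3) = (((x + 1) / 2) ^ (2 : ℕ))⁻¹ := by
      rw [show (1 : ℝ) - 3 = -(2 : ℕ) by norm_num, Real.rpow_neg hu.le, Real.rpow_natCast]
    rw [e2]
    field_simp
    ring
  · have heq : phiD s = fun y : ℝ =>
        (s - 1)⁻¹ * ((y + 1) / 2) ^ (s - 1) + (y - 1) / 2 * ((y + 1) / 2) ^ (s - 2) := by
      funext y; simp [phiD, hs]
    have h := ((hasDerivAt_rpow_u (c := s - 1) hx).const_mul (s - 1)⁻¹).add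
      ((((hasDerivAt_id x).sub_const 1).div_const 2).mul (hasDerivAt_rpow_u (c := s - 2) hx))
    rw [heq, phiD2]
    refine h.congr_deriv ?_
    symm
    simp only [id_eq]
    rw [show s - 1 - 1 = s - 2 by ring, show s - 2 - 1 = s - 3 by ring]
    have e1 : ((x + 1) / 2 : ℝ) ^ (s - 2) = ((x + 1) / 2) ^ (s - 3) * ((x + 1) / 2) := by
      rw [show s - 2 = (s - 3) + 1 by ring, Real.rpow_add_one hu.ne']
    rw [e1]
    have hs1 : s - 1 ≠ 0 := sub_ne_zero.mpr hs
    field_simp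
    ring

noncomputable def psiF (t x : ℝ) : ℝ :=
  if t = 0 then -Real.log ((x + 1) / 2)
  else if t = 1 then ((x + 1) / 2) * Real.log ((x + 1) / 2)
  else (t * (t - 1))⁻¹ * (((x + 1) / 2) ^ t - 1)

noncomputable def psiD (t x : ℝ) : ℝ :=
  if t = 0 then -(x + 1)⁻¹
  else if t = 1 then (Real.log ((x + 1) / 2) + 1) / 2
  else (2 * (t - 1))⁻¹ * ((x + 1) / 2) ^ (t - 1)

noncomputable def psiD2 (t x : ℝ) : ℝ := 1 / 4 * ((x + 1) / 2) ^ (t - 2)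

lemma psiF_hasDerivAt (t : ℝ) {x : ℝ} (hx : 0 < x) : HasDerivAt (psiF t) (psiD t x) x := by
  have hu := hu_pos hx
  have hx1 : x + 1 ≠ 0 := by linarith
  by_cases ht0 : t = 0
  · subst ht0
    have heq : psiF 0 = fun y : ℝ => -Real.log ((y + 1) / 2) := by funext y; simp [psiF]
    rw [heq, psiD, if_pos rfl]
    exact (hasDerivAt_log_u hx).neg
  · by_cases ht1 : t = 1
    · subst ht1
      have heq : psiF 1 = fun y : ℝ => ((y + 1) / 2) * Real.log ((y + 1) / 2) := by
        funext y; simp [psiF]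
      have h := (hasDerivAt_u x).mul (hasDerivAt_log_u hx)
      rw [heq, psiD, if_neg one_ne_zero, if_pos rfl]
      refine h.congr_deriv ?_
      symm
      field_simp
    · have heq : psiF t = fun y : ℝ => (t * (t - 1))⁻¹ * (((y + 1) / 2) ^ t - 1) := by
        funext y; simp [psiF, ht0, ht1]
      have h := ((hasDerivAt_rpow_u (c := t) hx).sub_const 1).const_mul (t * (t - 1))⁻¹
      rw [heq, psiD, if_neg ht0, if_neg ht1]
      refine h.congr_deriv ?_
      symm
      have h1 : t - 1 ≠ 0 := sub_ne_zero.mpr ht1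
      field_simp

lemma psiD_hasDerivAt (t : ℝ) {x : ℝ} (hx : 0 < x) : HasDerivAt (psiD t) (psiD2 t x) x := by
  have hu := hu_pos hx
  have hx1 : x + 1 ≠ 0 := by linarith
  by_cases ht0 : t = 0
  · subst ht0
    have heq : psiD 0 = fun y : ℝ => -(y + 1)⁻¹ := by funext y; simp [psiD]
    have h := (((hasDerivAt_id x).add_const 1).inv hx1).neg
    rw [heq, psiD2]
    refine h.congr_deriv ?_
    symm
    simp only [id_eq]
    have e2 : ((x + 1) / 2 : ℝ) ^ ((0 : ℝ) - 2) = (((x + 1) / 2) ^ (2 : ℕ))⁻¹ := by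
      rw [show (0 : ℝ) - 2 = -(2 : ℕ) by norm_num, Real.rpow_neg hu.le, Real.rpow_natCast]
    rw [e2]
    field_simp
    ring
  · by_cases ht1 : t = 1
    · subst ht1
      have heq : psiD 1 = fun y : ℝ => (Real.log ((y + 1) / 2) + 1) / 2 := by
        funext y; simp [psiD]
      have h := ((hasDerivAt_log_u hx).add_const 1).div_const 2
      rw [heq, psiD2]
      refine h.congr_deriv ?_
      symm
      have e2 : ((x + 1) / 2 : ℝ) ^ ((1 : ℝ) - 2) = (((x + 1) / 2))⁻¹ := by
        rw [show (1 : ℝ) - 2 = -(1 : ℝ) by norm_num, Real.rpow_neg_one]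
      rw [e2]
      field_simp
      ring
    · have heq : psiD t = fun y : ℝ => (2 * (t - 1))⁻¹ * ((y + 1) / 2) ^ (t - 1) := by
        funext y; simp [psiD, ht0, ht1]
      have h := (hasDerivAt_rpow_u (c := t - 1) hx).const_mul (2 * (t - 1))⁻¹
      rw [heq, psiD2]
      refine h.congr_deriv ?_
      symm
      rw [show t - 1 - 1 = t - 2 by ring]
      have h1 : t - 1 ≠ 0 := sub_ne_zero.mpr ht1
      field_simp
      ring

noncomputable def hfun (s t x : ℝ) : ℝ := ((x + 1) / 2) ^ (s - t - 1) * (s * x + 4 - s)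

lemma hfun_hasDerivAt (s t : ℝ) {x : ℝ} (hx : 0 < x) :
    HasDerivAt (hfun s t)
      (((x + 1) / 2) ^ (s - t - 2) * ((s - t - 1) * (s * x + 4 - s) + s * (x + 1)) / 2) x := by
  have hu := hu_pos hx
  have heq : hfun s t = fun y : ℝ => ((y + 1) / 2) ^ (s - t - 1) * (s * y + (4 - s)) := by
    funext y; simp only [hfun]; ring
  have h := (hasDerivAt_rpow_u (c := s - t - 1) hx).mul
    (((hasDerivAt_id x).const_mul s).add_const (4 - s))
  rw [heq]
  refine h.congr_deriv ?_
  symm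
  rw [show s - t - 1 - 1 = s - t - 2 by ring]
  have e1 : ((x + 1) / 2 : ℝ) ^ (s - t - 1) = ((x + 1) / 2) ^ (s - t - 2) * ((x + 1) / 2) := by
    rw [show s - t - 1 = (s - t - 2) + 1 by ring, Real.rpow_add_one hu.ne']
  rw [e1]
  simp only [id_eq]
  ring

lemma phiD2_eq (s t : ℝ) {x : ℝ} (hx : 0 < x) : phiD2 s x = psiD2 t x * hfun s t x := by
  have hu := hu_pos hx
  rw [phiD2, psiD2, hfun, show s - 3 = (t - 2) + (s - t - 1) by ring, Real.rpow_add hu]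
  ring

lemma psiD2_nonneg (t : ℝ) {x : ℝ} (hx : 0 < x) : 0 ≤ psiD2 t x :=
  mul_nonneg (by norm_num) (Real.rpow_nonneg (hu_pos hx).le _)

lemma monoOn_of_hasDerivAt {F F' : ℝ → ℝ} {a b : ℝ}
    (hd : ∀ x ∈ Set.Icc a b, HasDerivAt F (F' x) x)
    (h0 : ∀ x ∈ Set.Icc a b, 0 ≤ F' x) : MonotoneOn F (Set.Icc a b) := by
  apply monotoneOn_of_deriv_nonneg (convex_Icc a b)
  · exact fun x hx => (hd x hx).continuousAt.continuousWithinAt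
  · intro x hx
    rw [interior_Icc] at hx
    exact (hd x (Set.Ioo_subset_Icc_self hx)).differentiableAt.differentiableWithinAt
  · intro x hx
    rw [interior_Icc] at hx
    rw [(hd x (Set.Ioo_subset_Icc_self hx)).deriv]
    exact h0 x (Set.Ioo_subset_Icc_self hx)

lemma tangent_line {F F' : ℝ → ℝ} {a b : ℝ}
    (hd : ∀ x ∈ Set.Icc a b, HasDerivAt F (F' x) x)
    (hm : MonotoneOn F' (Set.Icc a b)) {x₀ x : ℝ}
    (hx₀ : x₀ ∈ Set.Icc a b) (hx : x ∈ Set.Icc a b) :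
    F x₀ + F' x₀ * (x - x₀) ≤ F x := by
  rcases lt_trichotomy x x₀ with h | h | h
  · have hsub : Set.Icc x x₀ ⊆ Set.Icc a b := Set.Icc_subset_Icc hx.1 hx₀.2
    obtain ⟨c, hc, hceq⟩ := exists_hasDerivAt_eq_slope F F' h
      (fun y hy => (hd y (hsub hy)).continuousAt.continuousWithinAt)
      (fun y hy => hd y (hsub (Set.Ioo_subset_Icc_self hy)))
    have hcmem : c ∈ Set.Icc a b := hsub (Set.Ioo_subset_Icc_self hc)
    have hle : F' c ≤ F' x₀ := hm hcmem hx₀ hc.2.le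
    rw [hceq] at hle
    have hpos : 0 < x₀ - x := by linarith
    have := (div_le_iff₀ hpos).mp hle
    nlinarith
  · subst h; simp
  · have hsub : Set.Icc x₀ x ⊆ Set.Icc a b := Set.Icc_subset_Icc hx₀.1 hx.2
    obtain ⟨c, hc, hceq⟩ := exists_hasDerivAt_eq_slope F F' h
      (fun y hy => (hd y (hsub hy)).continuousAt.continuousWithinAt)
      (fun y hy => hd y (hsub (Set.Ioo_subset_Icc_self hy)))
    have hcmem : c ∈ Set.Icc a b := hsub (Set.Ioo_subset_Icc_self hc)
    have hle : F' x₀ ≤ F' c := hm hx₀ hcmem hc.1.le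
    rw [hceq] at hle
    have hpos : 0 < x - x₀ := by linarith
    have := (le_div_iff₀ hpos).mp hle
    nlinarith

lemma key {a b : ℝ} {F F' F'' : ℝ → ℝ}
    (hd : ∀ x ∈ Set.Icc a b, HasDerivAt F (F' x) x)
    (hd2 : ∀ x ∈ Set.Icc a b, HasDerivAt F' (F'' x) x)
    (h2 : ∀ x ∈ Set.Icc a b, 0 ≤ F'' x)
    (h1 : (1 : ℝ) ∈ Set.Icc a b) (hF1 : F 1 = 0) :
    ∀ x ∈ Set.Icc a b, F' 1 * (x - 1) ≤ F x := by
  have hm : MonotoneOn F' (Set.Icc a b) := monoOn_of_hasDerivAt hd2 h2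
  intro x hx
  have := tangent_line hd hm h1 hx
  rw [hF1] at this
  linarith

lemma phiF_one (s : ℝ) : phiF s 1 = 0 := by
  unfold phiF; split_ifs <;> simp

lemma psiF_one (t : ℝ) : psiF t 1 = 0 := by
  unfold psiF
  split_ifs <;> norm_num

lemma zeta_eq (n : ℕ) (s : ℝ) (p q : Fin n → ℝ) (hq : ∀ i, 0 < q i) :
    zeta n s p q = ∑ i, q i * phiF s (p i / q i) := by
  unfold zeta phiF
  by_cases hs : s = 1
  · simp only [if_pos hs]
    refine Finset.sum_congr rfl fun i _ => ?_
    have hqi := (hq i).ne'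
    have harg : (p i + q i) / (2 * q i) = (p i / q i + 1) / 2 := by
      rw [div_add_one hqi, div_div, mul_comm]
    rw [harg]
    field_simp
  · simp only [if_neg hs, Finset.mul_sum]
    refine Finset.sum_congr rfl fun i _ => ?_
    have hqi := (hq i).ne'
    have harg : (p i + q i) / (2 * q i) = (p i / q i + 1) / 2 := by
      rw [div_add_one hqi, div_div, mul_comm]
    rw [harg]
    have h2 : q i * (p i / q i - 1) = p i - q i := by field_simp [(hq i).ne']
    rw [show q i * ((s - 1)⁻¹ * ((p i / q i - 1) * ((p i / q i + 1) / 2) ^ (s - 1)))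
        = (s - 1)⁻¹ * ((q i * (p i / q i - 1)) * ((p i / q i + 1) / 2) ^ (s - 1)) by ring, h2]

lemma omega_eq (n : ℕ) (t : ℝ) (p q : Fin n → ℝ) (hq : ∀ i, 0 < q i)
    (hq1 : ∑ i, q i = 1) :
    Omega n t q p = ∑ i, q i * psiF t (p i / q i) := by
  unfold Omega psiF
  by_cases ht0 : t = 0
  · simp only [if_pos ht0]
    refine Finset.sum_congr rfl fun i _ => ?_
    have hqi := (hq i).ne'
    have harg : 2 * q i / (q i + p i) = ((p i / q i + 1) / 2)⁻¹ := by
      rw [div_add_one hqi, div_div, inv_div]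
      ring
    rw [harg, Real.log_inv]
  · by_cases ht1 : t = 1
    · simp only [if_neg ht0, if_pos ht1]
      refine Finset.sum_congr rfl fun i _ => ?_
      have hqi := (hq i).ne'
      have harg : (q i + p i) / (2 * q i) = (p i / q i + 1) / 2 := by
        rw [div_add_one hqi, div_div]; ring
      rw [harg]
      have h2 : (q i + p i) / 2 = q i * ((p i / q i + 1) / 2) := by field_simp; ring
      rw [h2]
      ring
    · simp only [if_neg ht0, if_neg ht1]
      have hterm : ∀ i, q i * ((t * (t - 1))⁻¹ * (((p i / q i + 1) / 2) ^ t - 1))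
          = (t * (t - 1))⁻¹ * (q i * ((q i + p i) / (2 * q i)) ^ t) - (t * (t - 1))⁻¹ * q i := by
        intro i
        have hqi := (hq i).ne'
        have harg : (q i + p i) / (2 * q i) = (p i / q i + 1) / 2 := by
          rw [div_add_one hqi, div_div]; ring
        rw [harg]
        ring
      rw [Finset.sum_congr rfl fun i _ => hterm i, Finset.sum_sub_distrib,
        ← Finset.mul_sum, ← Finset.mul_sum, hq1]
      ring

theorem stmt_16 (s t : ℝ) (hs0 : 0 ≤ s) (hs4 : s ≤ 4) (hst : t ≤ s) (hts : 4 * (1 + t) ≤ s * (t - s + 6))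
    (n : ℕ) (hn : 2 ≤ n) (p q : Fin n → ℝ)
    (hp : ∀ i, 0 < p i) (hq : ∀ i, 0 < q i)
    (hp1 : ∑ i, p i = 1) (hq1 : ∑ i, q i = 1)
    (r R : ℝ) (hr : 0 < r) (hrR : r ≤ R)
    (hbound : ∀ i, r ≤ p i / q i ∧ p i / q i ≤ R) :
    ((r + 1) / 2) ^ (s - t - 1) * (s * r + 4 - s) * Omega n t q p ≤ zeta n s p q ∧
      zeta n s p q ≤ ((R + 1) / 2) ^ (s - t - 1) * (s * R + 4 - s) * Omega n t q p := by
  have hx_mem : ∀ i, p i / q i ∈ Set.Icc r R := fun i => ⟨(hbound i).1, (hbound i).2⟩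
  have hrq : ∀ i, r * q i ≤ p i := fun i => by
    have h := (hbound i).1
    rw [le_div_iff₀ (hq i)] at h
    linarith
  have hRq : ∀ i, p i ≤ R * q i := fun i => by
    have h := (hbound i).2
    rw [div_le_iff₀ (hq i)] at h
    linarith
  have hr1 : r ≤ 1 := by
    calc r = ∑ i, r * q i := by rw [← Finset.mul_sum, hq1, mul_one]
      _ ≤ ∑ i, p i := Finset.sum_le_sum fun i _ => hrq i
      _ = 1 := hp1
  have hR1 : (1 : ℝ) ≤ R := by
    calc (1 : ℝ) = ∑ i, p i := hp1.symm
      _ ≤ ∑ i, R * q i := Finset.sum_le_sum fun i _ => hRq i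
      _ = R := by rw [← Finset.mul_sum, hq1, mul_one]
  have h1mem : (1 : ℝ) ∈ Set.Icc r R := ⟨hr1, hR1⟩
  have hposIcc : ∀ x ∈ Set.Icc r R, (0 : ℝ) < x := fun x hx => lt_of_lt_of_le hr hx.1
  have hmono : MonotoneOn (hfun s t) (Set.Icc r R) := by
    apply monoOn_of_hasDerivAt (F' := fun x =>
      ((x + 1) / 2) ^ (s - t - 2) * ((s - t - 1) * (s * x + 4 - s) + s * (x + 1)) / 2)
    · exact fun x hx => hfun_hasDerivAt s t (hposIcc x hx)
    · intro x hx
      have hx0 := hposIcc x hx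
      have h1 : (0 : ℝ) ≤ ((x + 1) / 2) ^ (s - t - 2) := Real.rpow_nonneg (by linarith) _
      have h2 : (0 : ℝ) ≤ (s - t - 1) * (s * x + 4 - s) + s * (x + 1) := by
        nlinarith [mul_nonneg (mul_nonneg hs0 (sub_nonneg.mpr hst)) hx0.le]
      exact div_nonneg (mul_nonneg h1 h2) (by norm_num)
  have hz := zeta_eq n s p q hq
  have hO := omega_eq n t p q hq hq1
  constructor
  · have hcc : ∀ x ∈ Set.Icc r R, 0 ≤ phiD2 s x - hfun s t r * psiD2 t x := by
      intro x hx
      have hx0 := hposIcc x hx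
      rw [phiD2_eq s t hx0]
      have hm := hmono (Set.left_mem_Icc.mpr (le_trans hr1 hR1)) hx hx.1
      nlinarith [psiD2_nonneg t hx0]
    have hkey := key (F := fun x => phiF s x - hfun s t r * psiF t x)
      (F' := fun x => phiD s x - hfun s t r * psiD t x)
      (F'' := fun x => phiD2 s x - hfun s t r * psiD2 t x)
      (fun x hx => (phiF_hasDerivAt s (hposIcc x hx)).sub
        ((psiF_hasDerivAt t (hposIcc x hx)).const_mul _))
      (fun x hx => (phiD_hasDerivAt s (hposIcc x hx)).sub
        ((psiD_hasDerivAt t (hposIcc x hx)).const_mul _))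
      hcc h1mem (by simp [phiF_one, psiF_one])
    have hsum : ∑ i, q i * ((phiD s 1 - hfun s t r * psiD t 1) * (p i / q i - 1))
        ≤ ∑ i, q i * (phiF s (p i / q i) - hfun s t r * psiF t (p i / q i)) :=
      Finset.sum_le_sum fun i _ => mul_le_mul_of_nonneg_left (hkey _ (hx_mem i)) (hq i).le
    have hL0 : ∑ i, q i * ((phiD s 1 - hfun s t r * psiD t 1) * (p i / q i - 1)) = 0 := by
      have he : ∀ i, q i * ((phiD s 1 - hfun s t r * psiD t 1) * (p i / q i - 1))
          = (phiD s 1 - hfun s t r * psiD t 1) * (p i - q i) := by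
        intro i
        have h2 : q i * (p i / q i - 1) = p i - q i := by field_simp [(hq i).ne']
        rw [mul_left_comm, h2]
      rw [Finset.sum_congr rfl fun i _ => he i, ← Finset.mul_sum, Finset.sum_sub_distrib,
        hp1, hq1]
      ring
    have hR0 : ∑ i, q i * (phiF s (p i / q i) - hfun s t r * psiF t (p i / q i))
        = zeta n s p q - hfun s t r * Omega n t q p := by
      have he : ∀ i, q i * (phiF s (p i / q i) - hfun s t r * psiF t (p i / q i))
          = q i * phiF s (p i / q i) - hfun s t r * (q i * psiF t (p i / q i)) := fun i => by ring
      rw [Finset.sum_congr rfl fun i _ => he i, Finset.sum_sub_distrib, ← Finset.mul_sum,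
        ← hz, ← hO]
    have hcr : ((r + 1) / 2) ^ (s - t - 1) * (s * r + 4 - s) = hfun s t r := rfl
    rw [hcr]
    linarith
  · have hcc : ∀ x ∈ Set.Icc r R, 0 ≤ hfun s t R * psiD2 t x - phiD2 s x := by
      intro x hx
      have hx0 := hposIcc x hx
      rw [phiD2_eq s t hx0]
      have hm := hmono hx (Set.right_mem_Icc.mpr (le_trans hr1 hR1)) hx.2
      nlinarith [psiD2_nonneg t hx0]
    have hkey := key (F := fun x => hfun s t R * psiF t x - phiF s x)
      (F' := fun x => hfun s t R * psiD t x - phiD s x)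
      (F'' := fun x => hfun s t R * psiD2 t x - phiD2 s x)
      (fun x hx => ((psiF_hasDerivAt t (hposIcc x hx)).const_mul _).sub
        (phiF_hasDerivAt s (hposIcc x hx)))
      (fun x hx => ((psiD_hasDerivAt t (hposIcc x hx)).const_mul _).sub
        (phiD_hasDerivAt s (hposIcc x hx)))
      hcc h1mem (by simp [phiF_one, psiF_one])
    have hsum : ∑ i, q i * ((hfun s t R * psiD t 1 - phiD s 1) * (p i / q i - 1))
        ≤ ∑ i, q i * (hfun s t R * psiF t (p i / q i) - phiF s (p i / q i)) :=
      Finset.sum_le_sum fun i _ => mul_le_mul_of_nonneg_left (hkey _ (hx_mem i)) (hq i).le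
    have hL0 : ∑ i, q i * ((hfun s t R * psiD t 1 - phiD s 1) * (p i / q i - 1)) = 0 := by
      have he : ∀ i, q i * ((hfun s t R * psiD t 1 - phiD s 1) * (p i / q i - 1))
          = (hfun s t R * psiD t 1 - phiD s 1) * (p i - q i) := by
        intro i
        have h2 : q i * (p i / q i - 1) = p i - q i := by field_simp [(hq i).ne']
        rw [mul_left_comm, h2]
      rw [Finset.sum_congr rfl fun i _ => he i, ← Finset.mul_sum, Finset.sum_sub_distrib,
        hp1, hq1]
      ring
    have hR0 : ∑ i, q i * (hfun s t R * psiF t (p i / q i) - phiF s (p i / q i))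
        = hfun s t R * Omega n t q p - zeta n s p q := by
      have he : ∀ i, q i * (hfun s t R * psiF t (p i / q i) - phiF s (p i / q i))
          = hfun s t R * (q i * psiF t (p i / q i)) - q i * phiF s (p i / q i) := fun i => by ring
      rw [Finset.sum_congr rfl fun i _ => he i, Finset.sum_sub_distrib, ← Finset.mul_sum,
        ← hz, ← hO]
    have hcR : ((R + 1) / 2) ^ (s - t - 1) * (s * R + 4 - s) = hfun s t R := rfl
    rw [hcR]
    linarith
end
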